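/- Let k be a field of characteristic zero and let n ≥ 1 be an integer. Then there exists an injective group homomorphism from the symmetric group S_{n+2} into the projective general linear group PGL_{n+1}(k). Concretely, the permutation representation of S_{n+2} on k^{n+2} restricts to a faithful (n+1)-dimensional representation on the sum-zero hyperplane (the standard representation), and its projectivization S_{n+2} → PGL_{n+1}(k) is still injective. -/

import Mathlib

/-- `PGL n k` is the projective general linear group: the quotient of `GL n k`
by its center (the subgroup of nonzero scalar matrices). -/
abbrev PGL (n : ℕ) (k : Type*) [Field k] : Type _ :=
  GL (Fin n) k ⧸ Subgroup.center (GL (Fin n) k)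

section aux

variable (k : Type*) [Field k]

/-- The coordinate-sum linear functional on `Fin m → k`. -/
noncomputable def sumFun (m : ℕ) : (Fin m → k) →ₗ[k] k := ∑ i, LinearMap.proj i

lemma sumFun_apply {m : ℕ} (f : Fin m → k) : sumFun k m f = ∑ i, f i := by
  simp [sumFun]

/-- The sum-zero hyperplane. -/
noncomputable abbrev Vsub (m : ℕ) : Submodule k (Fin m → k) := LinearMap.ker (sumFun k m)

lemma finrank_Vsub (n : ℕ) : Module.finrank k (Vsub k (n + 2)) = n + 1 := by
  have hs : Function.Surjective (sumFun k (n + 2)) := by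
    intro c
    refine ⟨Pi.single 0 c, ?_⟩
    simp [sumFun_apply, Finset.sum_pi_single]
  have h1 := LinearMap.finrank_range_add_finrank_ker (sumFun k (n + 2))
  rw [LinearMap.range_eq_top.mpr hs, finrank_top, Module.finrank_self,
    Module.finrank_pi] at h1
  simp only [Fintype.card_fin] at h1
  show Module.finrank k (LinearMap.ker (sumFun k (n + 2))) = n + 1
  omega

/-- Permutation action on functions: `f ↦ f ∘ σ⁻¹`. -/
noncomputable def permEnd {m : ℕ} (σ : Equiv.Perm (Fin m)) :
    (Fin m → k) →ₗ[k] (Fin m → k) := LinearMap.funLeft k k (⇑σ⁻¹)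

lemma permEnd_mem {m : ℕ} (σ : Equiv.Perm (Fin m)) (f : Fin m → k)
    (hf : f ∈ Vsub k m) : permEnd k σ f ∈ Vsub k m := by
  simp only [Vsub, LinearMap.mem_ker, sumFun_apply, permEnd, LinearMap.funLeft_apply] at hf ⊢
  rw [Equiv.sum_comp σ⁻¹ f]
  exact hf

/-- The restricted action on the hyperplane. -/
noncomputable def permV {m : ℕ} (σ : Equiv.Perm (Fin m)) :
    Module.End k (Vsub k m) :=
  (permEnd k σ).restrict (permEnd_mem k σ)

lemma permV_apply {m : ℕ} (σ : Equiv.Perm (Fin m)) (x : Vsub k m) (j : Fin m) :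
    ((permV k σ x : Fin m → k)) j = (x : Fin m → k) (σ⁻¹ j) := by
  simp [permV, permEnd, LinearMap.restrict_apply]

lemma permV_one {m : ℕ} : permV k (1 : Equiv.Perm (Fin m)) = 1 := by
  apply LinearMap.ext
  intro x
  apply Subtype.ext
  funext j
  simp [permV_apply]

lemma permV_mul {m : ℕ} (σ τ : Equiv.Perm (Fin m)) :
    permV k (σ * τ) = permV k σ * permV k τ := by
  apply LinearMap.ext
  intro x
  apply Subtype.ext
  funext j
  simp [permV_apply, Module.End.mul_apply, Equiv.Perm.mul_apply]

/-- The representation as a homomorphism into the units of `End`. -/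
noncomputable def permUnits (m : ℕ) :
    Equiv.Perm (Fin m) →* (Module.End k (Vsub k m))ˣ where
  toFun σ :=
    { val := permV k σ
      inv := permV k σ⁻¹
      val_inv := by rw [← permV_mul, mul_inv_cancel, permV_one]
      inv_val := by rw [← permV_mul, inv_mul_cancel, permV_one] }
  map_one' := Units.ext (permV_one k)
  map_mul' σ τ := Units.ext (permV_mul k σ τ)

/-- A basis of the hyperplane indexed by `Fin (n+1)`. -/
noncomputable def bV (n : ℕ) : Module.Basis (Fin (n + 1)) k (Vsub k (n + 2)) :=
  (Module.finBasis k (Vsub k (n + 2))).reindex (finCongr (finrank_Vsub k n))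

end aux

/-- Let `k` be a field of characteristic zero and `n ≥ 1`. Then there exists an
injective group homomorphism from the symmetric group `S_{n+2}` into `PGL_{n+1}(k)`
(coming from the standard representation of `S_{n+2}` on the sum-zero hyperplane). -/
theorem stmt_1 (k : Type*) [Field k] [CharZero k] (n : ℕ) (hn : 1 ≤ n) :
    ∃ f : Equiv.Perm (Fin (n + 2)) →* PGL (n + 1) k, Function.Injective f := by
  classical
  set b := bV k n
  -- the algebra equivalence End V ≃ matrices
  set e := LinearMap.toMatrixAlgEquiv b with he
  set toGL : (Module.End k (Vsub k (n + 2)))ˣ →* GL (Fin (n + 1)) k :=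
    Units.map e.toAlgHom.toRingHom.toMonoidHom with htoGL
  set f : Equiv.Perm (Fin (n + 2)) →* PGL (n + 1) k :=
    (QuotientGroup.mk' (Subgroup.center (GL (Fin (n + 1)) k))).comp
      (toGL.comp (permUnits k (n + 2))) with hf
  refine ⟨f, ?_⟩
  rw [injective_iff_map_eq_one]
  intro σ hσ
  -- f σ = 1 means the image in GL is central
  have hcent : toGL (permUnits k (n + 2) σ) ∈
      Subgroup.center (GL (Fin (n + 1)) k) := by
    rwa [hf, MonoidHom.comp_apply, MonoidHom.comp_apply, QuotientGroup.mk'_apply,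
      QuotientGroup.eq_one_iff] at hσ
  -- hence the matrix commutes with all elementary matrices
  set M : Matrix (Fin (n + 1)) (Fin (n + 1)) k := e (permV k σ) with hM
  have hMval : ((toGL (permUnits k (n + 2) σ) : GL (Fin (n + 1)) k) :
      Matrix (Fin (n + 1)) (Fin (n + 1)) k) = M := rfl
  have hcomm : ∀ i j : Fin (n + 1), i ≠ j →
      Commute (Matrix.single i j 1) M := by
    intro i j hij
    set E := Matrix.single i j (1 : k) with hE
    have hE2 : E * E = 0 := by
      rw [hE]; exact Matrix.single_mul_single_of_ne (h := Ne.symm hij) ..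
    set t : GL (Fin (n + 1)) k :=
      { val := 1 + E
        inv := 1 - E
        val_inv := by
          rw [mul_sub, add_mul, add_mul, mul_one, one_mul, mul_one, hE2]
          abel
        inv_val := by
          rw [sub_mul, mul_add, mul_add, mul_one, one_mul, mul_one, hE2]
          abel }
    have := (Subgroup.mem_center_iff.mp hcent t)
    have hmat : (1 + E) * M = M * (1 + E) := by
      have := congrArg (fun u : GL (Fin (n + 1)) k =>
        (u : Matrix (Fin (n + 1)) (Fin (n + 1)) k)) this
      simpa [Units.val_mul, hMval] using this
    have : E * M = M * E := by
      rw [add_mul, one_mul, mul_add, mul_one] at hmat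
      exact add_left_cancel hmat
    exact this
  obtain ⟨c, hc⟩ := Matrix.mem_range_scalar_of_commute_single hcomm
  -- pull back: permV σ is the scalar c on V
  have hscalar : permV k σ = algebraMap k (Module.End k (Vsub k (n + 2))) c := by
    apply e.injective
    rw [AlgEquiv.commutes]
    exact hc.symm
  -- conclude σ = 1
  refine Equiv.Perm.ext fun i => ?_
  rw [Equiv.Perm.one_apply]
  by_contra hσi'
  -- pick l distinct from i and σ i
  obtain ⟨l, hl⟩ : ∃ l : Fin (n + 2), l ∉ ({i, σ i} : Finset (Fin (n + 2))) := by
    by_contra h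
    push_neg at h
    have hsub : (Finset.univ : Finset (Fin (n + 2))) ⊆ {i, σ i} := fun x _ => h x
    have := Finset.card_le_card hsub
    have h2 : ({i, σ i} : Finset (Fin (n + 2))).card ≤ 2 := by
      apply le_trans (Finset.card_insert_le _ _)
      simp
    simp only [Finset.card_univ, Fintype.card_fin] at this
    omega
  simp only [Finset.mem_insert, Finset.mem_singleton, not_or] at hl
  obtain ⟨hli, hlσ⟩ := hl
  -- the vector e_i - e_l lies in V
  have hmem : (Pi.single i 1 - Pi.single l 1 : Fin (n + 2) → k) ∈ Vsub k (n + 2) := by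
    simp [LinearMap.mem_ker, sumFun_apply, Finset.sum_sub_distrib, Finset.sum_pi_single]
  set x : Vsub k (n + 2) := ⟨_, hmem⟩ with hx
  have happ := congrArg (fun g : Module.End k (Vsub k (n + 2)) =>
    ((g x : Vsub k (n + 2)) : Fin (n + 2) → k) (σ i)) hscalar
  simp only [Module.algebraMap_end_apply] at happ
  rw [permV_apply] at happ
  have hleft : ((x : Fin (n + 2) → k)) (σ⁻¹ (σ i)) = 1 := by
    simp [hx, Pi.single_eq_of_ne (Ne.symm hli)]
  have hright : (c • (x : Fin (n + 2) → k)) (σ i) = 0 := by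
    simp [hx, Pi.single_eq_of_ne hσi', Pi.single_eq_of_ne (fun h => hlσ h.symm)]
  rw [hleft] at happ
  have : (1 : k) = 0 := by
    rw [happ]
    exact hright
  exact one_ne_zero this
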